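/- Let n be odd and let v_1,…,v_n ∈ ℝ³ be the edge vectors of a generic closed n-gon (so v_1+⋯+v_n = 0 and Δ_i ≠ 0 for all i). Then the polygon is regular (i.e. a support system exists) if and only if Δ_1·Δ_2·…·Δ_n > 0. -/

import Mathlib

open Matrix
open Fin.NatCast
open Fin.CommRing

private lemma cross3_cross3 (a b c : Fin 3 → ℝ) :
    (a ⨯₃ b) ⨯₃ (b ⨯₃ c) = (a ⬝ᵥ (b ⨯₃ c)) • b := by
  ext i; fin_cases i <;> simp [cross_apply, dotProduct, Fin.sum_univ_three] <;> ring

private lemma dot_cross_cross (a b c d : Fin 3 → ℝ) :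
    (a ⨯₃ b) ⬝ᵥ ((b ⨯₃ c) ⨯₃ (c ⨯₃ d)) = (a ⬝ᵥ (b ⨯₃ c)) * (b ⬝ᵥ (c ⨯₃ d)) := by
  simp [cross_apply, dotProduct, Fin.sum_univ_three]; ring

private lemma smul_cross_smul (s r : ℝ) (x y : Fin 3 → ℝ) :
    (s • x) ⨯₃ (r • y) = (s * r) • (x ⨯₃ y) := by
  ext i; fin_cases i <;> simp [cross_apply] <;> ring

/-- Let `n` be odd and `v 0, …, v (n-1)` the edge vectors of a generic
closed `n`-gon (sum zero, all determinants `Δ i = ⟨v i, [v (i+1), v (i+2)]⟩` nonzero,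
indices mod `n`).  Then a support system exists iff `Δ_1·Δ_2·…·Δ_n > 0`. -/
theorem odd_polygon_regular_iff (n : ℕ) (hn : Odd n) [NeZero n]
    (v : Fin n → Fin 3 → ℝ)
    (hclosed : ∑ i, v i = 0)
    (Δ : Fin n → ℝ)
    (hΔ : ∀ i, Δ i = v i ⬝ᵥ (v (i + 1) ⨯₃ v (i + 2)))
    (hgen : ∀ i, Δ i ≠ 0) :
    (∃ u : Fin n → Fin 3 → ℝ, ∀ i, u i ⨯₃ u (i + 1) = v (i + 1)) ↔ 0 < ∏ i, Δ i := by
  constructor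
  · -- forward direction
    rintro ⟨u, hu⟩
    set D : Fin n → ℝ := fun j => u j ⬝ᵥ (u (j + 1) ⨯₃ u (j + 2)) with hD_def
    have hD : ∀ i, Δ i = D (i - 1) * D i := by
      intro i
      have e1 : u (i - 1) ⨯₃ u i = v i := by
        have := hu (i - 1); rwa [show i - 1 + 1 = i by ring] at this
      have e2 := hu i
      have e3 : u (i + 1) ⨯₃ u (i + 2) = v (i + 2) := by
        have := hu (i + 1); rwa [show i + 1 + 1 = i + 2 by ring] at this
      rw [hΔ, ← e1, ← e2, ← e3, dot_cross_cross, hD_def]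
      simp only [show i - 1 + 1 = i by ring, show i - 1 + 2 = i + 1 by ring]
    have key : ∏ i, Δ i = (∏ i, D i) ^ 2 := by
      rw [Finset.prod_congr rfl (fun i _ => hD i), Finset.prod_mul_distrib,
        show (∏ i, D (i - 1)) = ∏ i, D i from
          (Fintype.prod_equiv (Equiv.addRight (1 : Fin n)) D (fun i => D (i - 1))
            (fun i => show D i = D (i + 1 - 1) by rw [add_sub_cancel_right])).symm, sq]
    have hne : ∏ i, Δ i ≠ 0 := Finset.prod_ne_zero_iff.mpr fun i _ => hgen i
    rw [key] at hne ⊢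
    exact pow_two_pos_of_ne_zero (fun h => hne (by rw [h]; ring))
  · -- backward direction
    intro hP
    have hn1 : n ≠ 1 := by
      rintro rfl
      refine hgen 0 ?_
      rw [hΔ]
      have h1 : (0 + 1 : Fin 1) = 0 := Subsingleton.elim _ _
      have h2 : (0 + 2 : Fin 1) = 0 := Subsingleton.elim _ _
      rw [h1, h2, cross_self, dotProduct_zero]
    obtain ⟨m, rfl⟩ : ∃ m, n = m + 2 := ⟨n - 2, by have := NeZero.pos n; omega⟩
    obtain ⟨g, hg0, hgs⟩ : ∃ g : ℕ → ℝ, g 0 = 1 ∧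
        ∀ k, g (k + 1) = (Δ (k : Fin (m + 2)) * g k)⁻¹ :=
      ⟨fun k => Nat.rec 1 (fun k gk => (Δ (k : Fin (m + 2)) * gk)⁻¹) k, rfl, fun _ => rfl⟩
    have hpos : ∀ k, 0 < g k * ∏ j ∈ Finset.range k, Δ (j : Fin (m + 2)) := by
      intro k
      induction k with
      | zero => simp [hg0]
      | succ k ih =>
        have hgk : g k ≠ 0 := fun h => by simp [h] at ih
        have hΔk := hgen (k : Fin (m + 2))
        rw [hgs, Finset.prod_range_succ]
        have e : (Δ (k : Fin (m + 2)) * g k)⁻¹ *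
            ((∏ j ∈ Finset.range k, Δ (j : Fin (m + 2))) * Δ (k : Fin (m + 2))) =
            (g k * ∏ j ∈ Finset.range k, Δ (j : Fin (m + 2))) * ((g k)⁻¹) ^ 2 := by
          field_simp
        rw [e]
        exact mul_pos ih (pow_two_pos_of_ne_zero (inv_ne_zero hgk))
    have hgne : ∀ k, g k ≠ 0 := fun k h => by have := hpos k; simp [h] at this
    have hPr : 0 < ∏ j ∈ Finset.range (m + 2), Δ (j : Fin (m + 2)) := by
      rw [← Fin.prod_univ_eq_prod_range (fun j => Δ (j : Fin (m + 2))) (m + 2)]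
      simpa [Fin.cast_val_eq_self] using hP
    have hP1 : (∏ j ∈ Finset.range (m + 1), Δ (j : Fin (m + 2))) ≠ 0 :=
      Finset.prod_ne_zero_iff.mpr fun j _ => hgen _
    have h1 := hpos (m + 1)
    have hc : 0 < Δ ((m + 1 : ℕ) : Fin (m + 2)) * g (m + 1) := by
      have hPr' := hPr
      rw [Finset.prod_range_succ] at hPr'
      have e : Δ ((m + 1 : ℕ) : Fin (m + 2)) * g (m + 1) =
          (((∏ j ∈ Finset.range (m + 1), Δ (j : Fin (m + 2))) * Δ ((m + 1 : ℕ) : Fin (m + 2))) *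
            (g (m + 1) * ∏ j ∈ Finset.range (m + 1), Δ (j : Fin (m + 2)))) *
            ((∏ j ∈ Finset.range (m + 1), Δ (j : Fin (m + 2)))⁻¹) ^ 2 := by
        field_simp
      rw [e]
      exact mul_pos (mul_pos hPr' h1) (pow_two_pos_of_ne_zero (inv_ne_zero hP1))
    set c : ℝ := Δ ((m + 1 : ℕ) : Fin (m + 2)) * g (m + 1) with hc_def
    set a : ℝ := (Real.sqrt c)⁻¹ with ha_def
    have ha : a ≠ 0 := inv_ne_zero (Real.sqrt_ne_zero'.mpr hc)
    have ha2 : a ^ 2 = c⁻¹ := by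
      rw [ha_def, inv_pow, Real.sq_sqrt hc.le]
    set t : ℕ → ℝ := fun k => if Even k then a * g k else g k / a with ht_def
    refine ⟨fun i => t i.val • (v i ⨯₃ v (i + 1)), ?_⟩
    intro i
    have key : t i.val * t ((i + 1 : Fin (m + 2))).val * Δ i = 1 := by
      by_cases hi : i.val + 1 < m + 2
      · have hval : ((i + 1 : Fin (m + 2))).val = i.val + 1 := by
          rw [Fin.val_add, Fin.val_one, Nat.mod_eq_of_lt hi]
        rw [hval]
        have ht : t i.val * t (i.val + 1) = g i.val * g (i.val + 1) := by
          by_cases h : Even i.val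
          · have h' : ¬ Even (i.val + 1) := by simp [Nat.even_add_one, h]
            simp only [ht_def, if_pos h, if_neg h']
            field_simp
          · have h' : Even (i.val + 1) := by simp [Nat.even_add_one, h]
            simp only [ht_def, if_neg h, if_pos h']
            field_simp
        rw [ht, hgs, Fin.cast_val_eq_self]
        have h1 := hgne i.val
        have h2 := hgen i
        field_simp
      · have hival : i.val = m + 1 := by have := i.isLt; omega
        have hi1 : (i + 1 : Fin (m + 2)) = 0 := by
          apply Fin.ext
          rw [Fin.val_add, Fin.val_one, hival, Fin.val_zero,
            show m + 1 + 1 = m + 2 from rfl, Nat.mod_self]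
        have heven : Even (m + 1) := by
          obtain ⟨k, hk⟩ := hn; exact ⟨k, by omega⟩
        have hieq : i = ((m + 1 : ℕ) : Fin (m + 2)) := by
          rw [← hival, Fin.cast_val_eq_self]
        rw [hi1]
        have e1 : t i.val = a * g (m + 1) := by rw [hival]; simp [ht_def, heven]
        have e2 : t (0 : Fin (m + 2)).val = a := by
          simp [ht_def, hg0]
        rw [e1, e2, hieq]
        have : a * g (m + 1) * a * Δ ((m + 1 : ℕ) : Fin (m + 2)) = a ^ 2 * c := by
          rw [hc_def]; ring
        rw [this, ha2]
        exact inv_mul_cancel₀ (ne_of_gt hc)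
    rw [smul_cross_smul, show i + 1 + 1 = i + 2 by ring, cross3_cross3, ← hΔ, smul_smul, key,
      one_smul]
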